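/- There exist a constant C > 0 and ε₀ ∈ (0,1) such that for every ε ∈ (0, ε₀), the spiral map g_ε : ℝ → ℝ² satisfies: (distortion) for every t₁, t₂ ∈ ℝ, (1 − C/ln²(1/ε))·|t₁ − t₂| ≤ ‖g_ε(t₁) − g_ε(t₂)‖ ≤ (1 + C/ln²(1/ε))·|t₁ − t₂|; and (total movement) for every t ∈ ℝ, ‖g_ε(t) − (t, 0)‖ ≤ C. -/

import Mathlib

/-- The point `(a, b) ∈ ℝ²` (Euclidean plane). -/
noncomputable def pt (a b : ℝ) : EuclideanSpace ℝ (Fin 2) :=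
  (WithLp.equiv 2 (Fin 2 → ℝ)).symm ![a, b]

/-- The angle `φ_ε(t) = π ln(1/|t|) / ln(1/ε)`. -/
noncomputable def spiralPhi (ε t : ℝ) : ℝ :=
  Real.pi * Real.log (1 / |t|) / Real.log (1 / ε)

/-- The spiral map `g_ε : ℝ → ℝ²`. -/
noncomputable def spiral (ε t : ℝ) : EuclideanSpace ℝ (Fin 2) :=
  if 1 ≤ |t| then pt t 0
  else if |t| ≤ ε then pt (-t) 0
  else pt (t * Real.cos (spiralPhi ε t)) (t * Real.sin (spiralPhi ε t))

open Real

section Aux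

/-- The polar angle of the spiral map. -/
noncomputable def sTheta (ε t : ℝ) : ℝ :=
  (if t < 0 then Real.pi else 0) +
    Real.pi * min (Real.log (1/ε)) (max 0 (Real.log (1/|t|))) / Real.log (1/ε)

lemma pt_congr {a b c d : ℝ} (h1 : a = c) (h2 : b = d) : pt a b = pt c d := by rw [h1, h2]

lemma pt_sub (a b c d : ℝ) : pt a b - pt c d = pt (a-c) (b-d) := by
  simp [pt]; ext i; fin_cases i <;> simp

lemma norm_pt (a b : ℝ) : ‖pt a b‖ = Real.sqrt (a^2 + b^2) := by
  simp [pt, EuclideanSpace.norm_eq, Fin.sum_univ_two]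

lemma pt_zero : pt 0 0 = 0 := by
  ext i; fin_cases i <;> simp [pt]

lemma norm_polar_sq (r₁ r₂ θ₁ θ₂ : ℝ) :
    ‖pt (r₁*cos θ₁) (r₁*sin θ₁) - pt (r₂*cos θ₂) (r₂*sin θ₂)‖^2
      = r₁^2 + r₂^2 - 2*r₁*r₂*Real.cos (θ₁-θ₂) := by
  rw [pt_sub, norm_pt, Real.sq_sqrt (by positivity)]
  rw [Real.cos_sub]
  linear_combination r₁^2 * (Real.sin_sq_add_cos_sq θ₁) + r₂^2 * (Real.sin_sq_add_cos_sq θ₂)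

lemma one_sub_cos_le (x : ℝ) : 1 - Real.cos x ≤ x^2/2 := by
  have h1 : Real.sin (x/2)^2 ≤ (x/2)^2 := Real.sin_sq_le_sq
  have h2 : Real.sin (x/2)^2 = (1 - Real.cos x)/2 := by
    have hh := Real.abs_sin_half x
    have h3 : (0:ℝ) ≤ (1 - Real.cos x)/2 := by
      have := Real.cos_le_one x; linarith
    calc Real.sin (x/2)^2 = |Real.sin (x/2)|^2 := (sq_abs _).symm
      _ = Real.sqrt ((1 - Real.cos x)/2)^2 := by rw [hh]
      _ = (1 - Real.cos x)/2 := Real.sq_sqrt h3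
  nlinarith [h1, h2]

lemma cubic_le_exp {s : ℝ} (hs : 0 ≤ s) : 1 + s + s^2/2 + s^3/6 ≤ exp s := by
  have h := Real.sum_le_exp_of_nonneg hs 4
  simp [Finset.sum_range_succ, Nat.factorial] at h
  nlinarith [h]

lemma two_mul_log_le {v : ℝ} (hv : 1 ≤ v) : 2 * v * log v ≤ v^2 - 1 := by
  have hv0 : 0 < v := lt_of_lt_of_le one_pos hv
  set s := log v with hsdef
  have hs : 0 ≤ s := log_nonneg hv
  have hev : v = exp s := (exp_log hv0).symm
  have hP : 1 + s + s^2/2 + s^3/6 ≤ v := by rw [hev]; exact cubic_le_exp hs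
  nlinarith [mul_nonneg (sub_nonneg.2 hP) (sub_nonneg.2 hP), sq_nonneg s, sq_nonneg (s-1),
    mul_nonneg hs (sq_nonneg s), mul_nonneg (mul_nonneg hs hs) (mul_nonneg hs hs),
    mul_nonneg (mul_nonneg hs hs) hs,
    mul_nonneg (sub_nonneg.2 hP) hs]

lemma sqrt_mul_log_le {u : ℝ} (hu : 1 ≤ u) : Real.sqrt u * log u ≤ u - 1 := by
  have hu0 : (0:ℝ) ≤ u := le_trans zero_le_one hu
  have hv : 1 ≤ Real.sqrt u := by
    rw [show (1:ℝ) = Real.sqrt 1 by simp]; exact Real.sqrt_le_sqrt hu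
  have h := two_mul_log_le hv
  rw [Real.log_sqrt hu0] at h
  have hsq : Real.sqrt u ^ 2 = u := Real.sq_sqrt hu0
  nlinarith [h]

lemma log_sq_key {a b : ℝ} (ha : 0 < a) (hab : a ≤ b) :
    a * b * (log b - log a)^2 ≤ (b - a)^2 := by
  have hb : 0 < b := lt_of_lt_of_le ha hab
  set u := b / a with hu
  have hu1 : 1 ≤ u := (one_le_div ha).2 hab
  have hlog : log u = log b - log a := log_div hb.ne' ha.ne'
  have h := sqrt_mul_log_le hu1
  have hs : (Real.sqrt u * log u)^2 ≤ (u-1)^2 := by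
    have h0 : 0 ≤ Real.sqrt u * log u :=
      mul_nonneg (Real.sqrt_nonneg u) (log_nonneg hu1)
    nlinarith [h, h0]
  have hsq : Real.sqrt u ^ 2 = u := Real.sq_sqrt (by linarith)
  have key : u * (log u)^2 ≤ (u-1)^2 := by nlinarith [hs]
  have hb2 : b = a * u := by rw [hu]; field_simp [ha.ne']
  rw [hlog] at key
  have := mul_le_mul_of_nonneg_left key (sq_nonneg a)
  calc a * b * (log b - log a)^2 = a^2 * (u * (log b - log a)^2) := by
        rw [hb2]; ring
    _ ≤ a^2 * (u-1)^2 := this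
    _ = (b-a)^2 := by rw [hb2]; ring

lemma sq_le_exp' {y : ℝ} (hy0 : 0 ≤ y) : y^2 ≤ Real.exp y := by
  have hP : 1 + y + y^2/2 + y^3/6 ≤ exp y := cubic_le_exp hy0
  have h1 : 0 ≤ y * (y - 3)^2 := mul_nonneg hy0 (sq_nonneg _)
  nlinarith [hP, h1, sq_nonneg (y - 1), hy0]

lemma xlog_sq_le_one {x : ℝ} (hx : 0 < x) (hx1 : x ≤ 1) : x * (log x)^2 ≤ 1 := by
  set y := -log x with hy
  have hy0 : 0 ≤ y := by
    simp only [hy, neg_nonneg]; exact log_nonpos hx.le hx1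
  have hx_eq : x = exp (-y) := by rw [hy, neg_neg, exp_log hx]
  have hysq : y^2 ≤ exp y := sq_le_exp' hy0
  have hlogsq : (log x)^2 = y^2 := by rw [hy]; ring
  rw [hlogsq, hx_eq, Real.exp_neg]
  rw [inv_mul_le_iff₀ (exp_pos y), mul_one]
  exact hysq

lemma log_sq_key' {a b : ℝ} (ha : 0 < a) (hb : 0 < b) :
    a * b * (log b - log a)^2 ≤ (b - a)^2 := by
  rcases le_total a b with h | h
  · exact log_sq_key ha h
  · have := log_sq_key hb h
    nlinarith [this]

lemma log_sq_key2 {a b : ℝ} (ha : 0 < a) (hb : 0 < b) :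
    a * b * (log b - log a)^2 ≤ (a + b)^2 := by
  suffices H : ∀ x y : ℝ, 0 < x → 0 < y → x ≤ y → x * y * (log y - log x)^2 ≤ (x + y)^2 by
    rcases le_total a b with h | h
    · exact H a b ha hb h
    · have := H b a hb ha h
      nlinarith [this]
  intro x y hx hy hxy
  have hq : 0 < x / y := div_pos hx hy
  have hq1 : x / y ≤ 1 := (div_le_one hy).2 hxy
  have hkey := xlog_sq_le_one hq hq1
  have hlog : log (x / y) = log x - log y := log_div hx.ne' hy.ne'
  rw [hlog] at hkey
  have h2 : x * y * (log y - log x)^2 = y^2 * ((x/y) * (log x - log y)^2) := by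
    field_simp
    ring
  rw [h2]
  have h3 : y^2 * ((x/y) * (log x - log y)^2) ≤ y^2 * 1 :=
    mul_le_mul_of_nonneg_left hkey (sq_nonneg _)
  nlinarith [h3, mul_pos hx hy, sq_nonneg x]

lemma le_of_sq_le_sq'' {D R : ℝ} (hD : 0 ≤ D) (hR : 0 ≤ R) (h : D^2 ≤ R^2) : D ≤ R := by
  nlinarith

lemma pi_sq_le : Real.pi^2 ≤ 10 := by nlinarith [Real.pi_lt_d2, Real.pi_pos]

lemma bound_same {D r₁ r₂ v L : ℝ} (hD : 0 ≤ D) (hr₁ : 0 < r₁) (hr₂ : 0 < r₂) (hL : 0 < L)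
    (hD2 : D^2 = r₁^2 + r₂^2 - 2*r₁*r₂*Real.cos v)
    (hv : v^2 ≤ (Real.pi/L)^2 * (Real.log r₂ - Real.log r₁)^2) :
    (1 - 10/L^2) * |r₁ - r₂| ≤ D ∧ D ≤ (1 + 10/L^2) * |r₁ - r₂| := by
  have hδ : 0 ≤ 10/L^2 := by positivity
  have habs : |r₁ - r₂|^2 = (r₁ - r₂)^2 := sq_abs _
  have hrr : 0 < r₁ * r₂ := mul_pos hr₁ hr₂
  have e4 : (Real.pi/L)^2 ≤ 10/L^2 := by
    rw [div_pow]
    gcongr <;> first | exact pi_sq_le | positivity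
  constructor
  · have hsq : (r₁ - r₂)^2 ≤ D^2 := by nlinarith [Real.cos_le_one v]
    have h1 : |r₁ - r₂| ≤ D := le_of_sq_le_sq'' (abs_nonneg _) hD (by rw [habs]; exact hsq)
    nlinarith [abs_nonneg (r₁ - r₂)]
  · have e1 : 2*r₁*r₂*(1 - Real.cos v) ≤ r₁*r₂*v^2 := by
      nlinarith [one_sub_cos_le v]
    have e2 : r₁*r₂*v^2 ≤ (Real.pi/L)^2 * (r₁*r₂*(Real.log r₂ - Real.log r₁)^2) := by
      nlinarith [hv]
    have e3 : (Real.pi/L)^2 * (r₁*r₂*(Real.log r₂ - Real.log r₁)^2)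
        ≤ (Real.pi/L)^2 * (r₂ - r₁)^2 :=
      mul_le_mul_of_nonneg_left (log_sq_key' hr₁ hr₂) (by positivity)
    have e4' : (Real.pi/L)^2 * (r₂ - r₁)^2 ≤ 10/L^2 * (r₂ - r₁)^2 :=
      mul_le_mul_of_nonneg_right e4 (sq_nonneg _)
    apply le_of_sq_le_sq'' hD (by positivity)
    have h5 : D^2 ≤ (1 + 10/L^2) * (r₁ - r₂)^2 := by nlinarith
    calc D^2 ≤ (1 + 10/L^2) * (r₁ - r₂)^2 := h5
      _ ≤ (1 + 10/L^2)^2 * (r₁ - r₂)^2 := by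
          nlinarith [mul_nonneg hδ (sq_nonneg (r₁ - r₂)),
            mul_nonneg (mul_nonneg hδ hδ) (sq_nonneg (r₁ - r₂))]
      _ = ((1 + 10/L^2) * |r₁ - r₂|)^2 := by rw [mul_pow, habs]

lemma bound_opp {D r₁ r₂ v L : ℝ} (hD : 0 ≤ D) (hr₁ : 0 < r₁) (hr₂ : 0 < r₂) (hL : 0 < L)
    (hD2 : D^2 = r₁^2 + r₂^2 + 2*r₁*r₂*Real.cos v)
    (hv : v^2 ≤ (Real.pi/L)^2 * (Real.log r₂ - Real.log r₁)^2) :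
    (1 - 10/L^2) * (r₁ + r₂) ≤ D ∧ D ≤ (1 + 10/L^2) * (r₁ + r₂) := by
  have hδ : 0 ≤ 10/L^2 := by positivity
  have hrr : 0 < r₁ * r₂ := mul_pos hr₁ hr₂
  have e4 : (Real.pi/L)^2 ≤ 10/L^2 := by
    rw [div_pow]
    gcongr <;> first | exact pi_sq_le | positivity
  constructor
  · by_cases hδ1 : 1 ≤ 10/L^2
    · have h0 : (1 - 10/L^2) * (r₁ + r₂) ≤ 0 := by nlinarith
      linarith
    · push_neg at hδ1
      have e1 : 2*r₁*r₂*(1 - Real.cos v) ≤ r₁*r₂*v^2 := by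
        nlinarith [one_sub_cos_le v]
      have e2 : r₁*r₂*v^2 ≤ (Real.pi/L)^2 * (r₁*r₂*(Real.log r₂ - Real.log r₁)^2) := by
        nlinarith [hv]
      have e3 : (Real.pi/L)^2 * (r₁*r₂*(Real.log r₂ - Real.log r₁)^2)
          ≤ (Real.pi/L)^2 * (r₁ + r₂)^2 :=
        mul_le_mul_of_nonneg_left (log_sq_key2 hr₁ hr₂) (by positivity)
      have e4' : (Real.pi/L)^2 * (r₁ + r₂)^2 ≤ 10/L^2 * (r₁ + r₂)^2 :=
        mul_le_mul_of_nonneg_right e4 (sq_nonneg _)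
      have hDsq : ((1 - 10/L^2) * (r₁ + r₂))^2 ≤ D^2 := by nlinarith
      exact le_of_sq_le_sq'' (mul_nonneg (by linarith) (by positivity)) hD hDsq
  · have hsq : D^2 ≤ (r₁ + r₂)^2 := by nlinarith [Real.cos_le_one v]
    have h1 : D ≤ r₁ + r₂ := le_of_sq_le_sq'' hD (by positivity) hsq
    nlinarith

lemma spiral_polar {ε t : ℝ} (hε0 : 0 < ε) (hε1 : ε < 1) (ht : t ≠ 0) :
    spiral ε t = pt (|t| * cos (sTheta ε t)) (|t| * sin (sTheta ε t)) := by
  have htpos : 0 < |t| := abs_pos.2 ht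
  have hL : 0 < Real.log (1/ε) := Real.log_pos (by rw [lt_div_iff₀ hε0]; linarith)
  unfold spiral sTheta
  rcases ht.lt_or_gt with hs | hs
  · rw [if_pos hs]
    split_ifs with h1 h2
    · have hlt : Real.log (1/|t|) ≤ 0 :=
        Real.log_nonpos (by positivity) (by rw [div_le_one htpos]; linarith)
      rw [max_eq_left hlt, min_eq_right hL.le, mul_zero, zero_div, add_zero,
        Real.cos_pi, Real.sin_pi, abs_of_neg hs]
      exact pt_congr (by ring) (by ring)
    · have hlt : Real.log (1/ε) ≤ Real.log (1/|t|) :=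
        Real.log_le_log (by positivity) (one_div_le_one_div_of_le htpos h2)
      rw [max_eq_right (le_trans hL.le hlt), min_eq_left hlt,
        mul_div_assoc, div_self hL.ne', mul_one,
        show Real.pi + Real.pi = 2*Real.pi by ring,
        Real.cos_two_pi, Real.sin_two_pi, abs_of_neg hs]
      exact pt_congr (by ring) (by ring)
    · push_neg at h1 h2
      have hlt1 : 0 < Real.log (1/|t|) := Real.log_pos (by rw [lt_div_iff₀ htpos]; linarith)
      have hlt2 : Real.log (1/|t|) ≤ Real.log (1/ε) :=
        Real.log_le_log (by positivity) (one_div_le_one_div_of_le hε0 h2.le)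
      rw [max_eq_right hlt1.le, min_eq_right hlt2,
        show Real.pi * Real.log (1/|t|) / Real.log (1/ε) = spiralPhi ε t from rfl,
        add_comm Real.pi _, Real.cos_add_pi, Real.sin_add_pi, abs_of_neg hs]
      exact pt_congr (by ring) (by ring)
  · rw [if_neg (not_lt.2 hs.le)]
    split_ifs with h1 h2
    · have hlt : Real.log (1/|t|) ≤ 0 :=
        Real.log_nonpos (by positivity) (by rw [div_le_one htpos]; linarith)
      rw [max_eq_left hlt, min_eq_right hL.le, mul_zero, zero_div, add_zero,
        Real.cos_zero, Real.sin_zero, abs_of_pos hs]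
      exact pt_congr (by ring) (by ring)
    · have hlt : Real.log (1/ε) ≤ Real.log (1/|t|) :=
        Real.log_le_log (by positivity) (one_div_le_one_div_of_le htpos h2)
      rw [max_eq_right (le_trans hL.le hlt), min_eq_left hlt,
        mul_div_assoc, div_self hL.ne', mul_one, zero_add,
        Real.cos_pi, Real.sin_pi, abs_of_pos hs]
      exact pt_congr (by ring) (by ring)
    · push_neg at h1 h2
      have hlt1 : 0 < Real.log (1/|t|) := Real.log_pos (by rw [lt_div_iff₀ htpos]; linarith)
      have hlt2 : Real.log (1/|t|) ≤ Real.log (1/ε) :=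
        Real.log_le_log (by positivity) (one_div_le_one_div_of_le hε0 h2.le)
      rw [max_eq_right hlt1.le, min_eq_right hlt2,
        show Real.pi * Real.log (1/|t|) / Real.log (1/ε) = spiralPhi ε t from rfl,
        zero_add, abs_of_pos hs]

lemma spiral_zero {ε : ℝ} (hε0 : 0 < ε) : spiral ε 0 = 0 := by
  unfold spiral
  rw [abs_zero, if_neg (by norm_num), if_pos hε0.le, neg_zero, pt_zero]

lemma norm_spiral {ε t : ℝ} (hε0 : 0 < ε) (hε1 : ε < 1) : ‖spiral ε t‖ = |t| := by
  by_cases ht : t = 0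
  · subst ht; rw [spiral_zero hε0, norm_zero, abs_zero]
  · rw [spiral_polar hε0 hε1 ht, norm_pt]
    have h : (|t| * cos (sTheta ε t))^2 + (|t| * sin (sTheta ε t))^2 = |t|^2 := by
      linear_combination (|t|^2) * (Real.sin_sq_add_cos_sq (sTheta ε t))
    rw [h, Real.sqrt_sq (abs_nonneg t)]

/-- clamp bound -/
lemma clamp_abs_le {L x y : ℝ} :
    |min L (max 0 x) - min L (max 0 y)| ≤ |x - y| := by
  calc |min L (max 0 x) - min L (max 0 y)|
      ≤ max |L - L| |max 0 x - max 0 y| := abs_min_sub_min_le_max L (max 0 x) L (max 0 y)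
    _ = |max 0 x - max 0 y| := by rw [sub_self, abs_zero]; exact max_eq_right (abs_nonneg _)
    _ ≤ max |0 - 0| |x - y| := abs_max_sub_max_le_max 0 x 0 y
    _ = |x - y| := by rw [sub_self, abs_zero]; exact max_eq_right (abs_nonneg _)

lemma sTheta_v_bound {ε t₁ t₂ : ℝ} (hε0 : 0 < ε) (hε1 : ε < 1) :
    (Real.pi * (min (Real.log (1/ε)) (max 0 (Real.log (1/|t₁|)))
        - min (Real.log (1/ε)) (max 0 (Real.log (1/|t₂|)))) / Real.log (1/ε))^2
      ≤ (Real.pi/(Real.log (1/ε)))^2 * (Real.log (abs t₂) - Real.log (abs t₁))^2 := by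
  have hc : abs (min (Real.log (1/ε)) (max 0 (Real.log (1/|t₁|)))
        - min (Real.log (1/ε)) (max 0 (Real.log (1/|t₂|))))
      ≤ abs (Real.log (abs t₂) - Real.log (abs t₁)) := by
    have h := clamp_abs_le (L := Real.log (1/ε)) (x := Real.log (1/|t₁|))
      (y := Real.log (1/|t₂|))
    have e1 : Real.log (1/|t₁|) = -Real.log (abs t₁) := by rw [one_div, Real.log_inv]
    have e2 : Real.log (1/|t₂|) = -Real.log (abs t₂) := by rw [one_div, Real.log_inv]
    have e3 : Real.log (1/|t₁|) - Real.log (1/|t₂|)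
        = Real.log (abs t₂) - Real.log (abs t₁) := by rw [e1, e2]; ring
    rw [e3] at h
    exact h
  have hsq : (min (Real.log (1/ε)) (max 0 (Real.log (1/|t₁|)))
        - min (Real.log (1/ε)) (max 0 (Real.log (1/|t₂|))))^2
      ≤ (Real.log (abs t₂) - Real.log (abs t₁))^2 := by
    rw [← sq_abs, ← sq_abs (Real.log (abs t₂) - Real.log (abs t₁))]
    exact pow_le_pow_left₀ (abs_nonneg _) hc 2
  calc (Real.pi * (min (Real.log (1/ε)) (max 0 (Real.log (1/|t₁|)))
        - min (Real.log (1/ε)) (max 0 (Real.log (1/|t₂|)))) / Real.log (1/ε))^2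
      = (Real.pi/(Real.log (1/ε)))^2 * (min (Real.log (1/ε)) (max 0 (Real.log (1/|t₁|)))
        - min (Real.log (1/ε)) (max 0 (Real.log (1/|t₂|))))^2 := by ring
    _ ≤ (Real.pi/(Real.log (1/ε)))^2 * (Real.log (abs t₂) - Real.log (abs t₁))^2 :=
        mul_le_mul_of_nonneg_left hsq (by positivity)

lemma dist_bounds_nonzero {ε t₁ t₂ : ℝ} (hε0 : 0 < ε) (hε1 : ε < 1)
    (h1 : t₁ ≠ 0) (h2 : t₂ ≠ 0) :
    (1 - 10 / (Real.log (1/ε))^2) * |t₁ - t₂| ≤ ‖spiral ε t₁ - spiral ε t₂‖ ∧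
    ‖spiral ε t₁ - spiral ε t₂‖ ≤ (1 + 10 / (Real.log (1/ε))^2) * |t₁ - t₂| := by
  have hL : 0 < Real.log (1/ε) := Real.log_pos (by rw [lt_div_iff₀ hε0]; linarith)
  have hr₁ : 0 < |t₁| := abs_pos.2 h1
  have hr₂ : 0 < |t₂| := abs_pos.2 h2
  have hD : 0 ≤ ‖spiral ε t₁ - spiral ε t₂‖ := norm_nonneg _
  obtain ⟨v, hv_def⟩ : ∃ v : ℝ, v = Real.pi * (min (Real.log (1/ε)) (max 0 (Real.log (1/|t₁|)))
      - min (Real.log (1/ε)) (max 0 (Real.log (1/|t₂|)))) / Real.log (1/ε) := ⟨_, rfl⟩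
  have hv : v^2 ≤ (Real.pi/(Real.log (1/ε)))^2
      * (Real.log (abs t₂) - Real.log (abs t₁))^2 := by
    rw [hv_def]; exact sTheta_v_bound hε0 hε1
  have hD2 : ‖spiral ε t₁ - spiral ε t₂‖^2
      = |t₁|^2 + |t₂|^2 - 2 * |t₁| * |t₂| * Real.cos (sTheta ε t₁ - sTheta ε t₂) := by
    rw [spiral_polar hε0 hε1 h1, spiral_polar hε0 hε1 h2]
    exact norm_polar_sq _ _ _ _
  rcases lt_trichotomy t₁ 0 with hs₁ | hs₁ | hs₁
  · rcases lt_trichotomy t₂ 0 with hs₂ | hs₂ | hs₂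
    · -- both negative
      have hang : sTheta ε t₁ - sTheta ε t₂ = v := by
        rw [hv_def]; unfold sTheta
        rw [if_pos hs₁, if_pos hs₂]
        ring
      rw [hang] at hD2
      have hB := bound_same hD hr₁ hr₂ hL hD2 hv
      have habs : |t₁ - t₂| = abs (|t₁| - |t₂|) := by
        rw [abs_of_neg hs₁, abs_of_neg hs₂, abs_sub_comm]
        ring_nf
      rw [habs]
      exact hB
    · exact absurd hs₂ h2
    · -- t₁ < 0 < t₂
      have hcos : Real.cos (sTheta ε t₁ - sTheta ε t₂) = -Real.cos v := by
        have hang : sTheta ε t₁ - sTheta ε t₂ = v + Real.pi := by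
          rw [hv_def]; unfold sTheta
          rw [if_pos hs₁, if_neg (not_lt.2 hs₂.le)]
          ring
        rw [hang, Real.cos_add_pi]
      rw [hcos] at hD2
      have hD2' : ‖spiral ε t₁ - spiral ε t₂‖^2
          = |t₁|^2 + |t₂|^2 + 2 * |t₁| * |t₂| * Real.cos v := by rw [hD2]; ring
      have hB := bound_opp hD hr₁ hr₂ hL hD2' hv
      have habs : |t₁ - t₂| = |t₁| + |t₂| := by
        rw [abs_of_neg hs₁, abs_of_pos hs₂, abs_of_neg (by linarith : t₁ - t₂ < 0)]
        ring
      rw [habs]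
      exact hB
  · exact absurd hs₁ h1
  · rcases lt_trichotomy t₂ 0 with hs₂ | hs₂ | hs₂
    · -- t₂ < 0 < t₁
      have hcos : Real.cos (sTheta ε t₁ - sTheta ε t₂) = -Real.cos v := by
        have hang : sTheta ε t₁ - sTheta ε t₂ = v - Real.pi := by
          rw [hv_def]; unfold sTheta
          rw [if_neg (not_lt.2 hs₁.le), if_pos hs₂]
          ring
        rw [hang, Real.cos_sub_pi]
      rw [hcos] at hD2
      have hD2' : ‖spiral ε t₁ - spiral ε t₂‖^2
          = |t₁|^2 + |t₂|^2 + 2 * |t₁| * |t₂| * Real.cos v := by rw [hD2]; ring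
      have hB := bound_opp hD hr₁ hr₂ hL hD2' hv
      have habs : |t₁ - t₂| = |t₁| + |t₂| := by
        rw [abs_of_pos hs₁, abs_of_neg hs₂, abs_of_pos (by linarith : 0 < t₁ - t₂)]
        ring
      rw [habs]
      exact hB
    · exact absurd hs₂ h2
    · -- both positive
      have hang : sTheta ε t₁ - sTheta ε t₂ = v := by
        rw [hv_def]; unfold sTheta
        rw [if_neg (not_lt.2 hs₁.le), if_neg (not_lt.2 hs₂.le)]
        ring
      rw [hang] at hD2
      have hB := bound_same hD hr₁ hr₂ hL hD2 hv
      have habs : |t₁ - t₂| = abs (|t₁| - |t₂|) := by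
        rw [abs_of_pos hs₁, abs_of_pos hs₂]
      rw [habs]
      exact hB

end Aux

/-- **The spiral map is a near isometry with bounded movement.** -/
theorem spiral_distortion_and_movement :
    ∃ C > (0 : ℝ), ∃ ε₀ : ℝ, 0 < ε₀ ∧ ε₀ < 1 ∧ ∀ ε : ℝ, 0 < ε → ε < ε₀ →
      (∀ t₁ t₂ : ℝ,
        (1 - C / (Real.log (1 / ε)) ^ 2) * |t₁ - t₂| ≤ ‖spiral ε t₁ - spiral ε t₂‖ ∧
        ‖spiral ε t₁ - spiral ε t₂‖ ≤ (1 + C / (Real.log (1 / ε)) ^ 2) * |t₁ - t₂|) ∧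
      (∀ t : ℝ, ‖spiral ε t - pt t 0‖ ≤ C) := by
  refine ⟨10, by norm_num, 1/2, by norm_num, by norm_num, ?_⟩
  intro ε hε0 hε2
  have hε1 : ε < 1 := by linarith
  have hL : 0 < Real.log (1/ε) := Real.log_pos (by rw [lt_div_iff₀ hε0]; linarith)
  have hδ : 0 ≤ 10 / (Real.log (1/ε))^2 := by positivity
  constructor
  · intro t₁ t₂
    by_cases h1 : t₁ = 0
    · subst h1
      have e : ‖spiral ε 0 - spiral ε t₂‖ = |t₂| := by
        rw [spiral_zero hε0]
        rw [show (0:EuclideanSpace ℝ (Fin 2)) - spiral ε t₂ = -(spiral ε t₂) from zero_sub _]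
        rw [norm_neg, norm_spiral hε0 hε1]
      rw [e]
      have e2 : |(0:ℝ) - t₂| = |t₂| := by rw [zero_sub, abs_neg]
      rw [e2]
      constructor
      · nlinarith [abs_nonneg t₂]
      · nlinarith [abs_nonneg t₂]
    · by_cases h2 : t₂ = 0
      · subst h2
        have e : ‖spiral ε t₁ - spiral ε 0‖ = |t₁| := by
          rw [spiral_zero hε0, sub_zero, norm_spiral hε0 hε1]
        rw [e, sub_zero]
        constructor
        · nlinarith [abs_nonneg t₁]
        · nlinarith [abs_nonneg t₁]
      · exact dist_bounds_nonzero hε0 hε1 h1 h2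
  · intro t
    by_cases h : 1 ≤ |t|
    · have e : spiral ε t = pt t 0 := by unfold spiral; rw [if_pos h]
      rw [e, sub_self, norm_zero]
      norm_num
    · push_neg at h
      have h1 : ‖spiral ε t - pt t 0‖ ≤ ‖spiral ε t‖ + ‖pt t 0‖ := norm_sub_le _ _
      have h2 : ‖spiral ε t‖ = |t| := norm_spiral hε0 hε1
      have h3 : ‖pt t 0‖ = |t| := by
        rw [norm_pt, show t^2 + 0^2 = t^2 by ring, Real.sqrt_sq_eq_abs]
      rw [h2, h3] at h1
      linarith
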